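/- For any Schwartz function φ on ℝ, any m ∈ ℕ, positive reals c_1,…,c_m, the identity (1/2π)⟨1/∏_{j=1}^m sin(c_j(t+i0)), φ̂(t)⟩ = (-2i)^m Σ_{k ∈ ℤ_+^m} φ(Σ_{j=1}^m (2k_j+1) c_j) holds, where φ̂ is the Fourier transform of φ. -/

import Mathlib

open MeasureTheory Filter Topology Real

/-- The Fourier transform `φ̂(k) = ∫ φ(λ) e^{-ikλ} dλ`. -/
noncomputable def fourierT (φ : SchwartzMap ℝ ℂ) (k : ℝ) : ℂ :=
  ∫ l : ℝ, φ l * Complex.exp (-(Complex.I * k * l))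

namespace Stmt1Aux

lemma summable_pi_prod {m : ℕ} (g : Fin m → ℕ → ℝ) (h0 : ∀ j n, 0 ≤ g j n)
    (h : ∀ j, Summable (g j)) : Summable (fun k : Fin m → ℕ => ∏ j, g j (k j)) := by
  induction m with
  | zero =>
    haveI : Finite (Fin 0 → ℕ) := Finite.of_subsingleton
    exact Summable.of_finite
  | succ n ih =>
    rw [← (Fin.consEquiv (fun _ => ℕ)).summable_iff]
    have heq : ((fun k : Fin (n+1) → ℕ => ∏ j, g j (k j)) ∘ (Fin.consEquiv fun _ => ℕ))
        = fun p : ℕ × (Fin n → ℕ) => g 0 p.1 * ∏ j : Fin n, g j.succ (p.2 j) := by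
      ext p
      simp [Fin.consEquiv, Fin.prod_univ_succ]
    rw [heq]
    have hin := ih (fun j => g j.succ) (fun j n => h0 _ _) (fun j => h _)
    apply Summable.mul_of_nonneg (h 0) hin (fun n => h0 _ _)
      (fun k => Finset.prod_nonneg fun j _ => h0 _ _)

lemma tsum_pi_prod {m : ℕ} (f : Fin m → ℕ → ℂ) (h : ∀ j, Summable fun n => ‖f j n‖) :
    ∑' k : Fin m → ℕ, ∏ j, f j (k j) = ∏ j, ∑' n, f j n := by
  induction m with
  | zero =>
    rw [tsum_eq_single (fun i => i.elim0) (fun b hb =>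
      absurd (funext fun i => i.elim0) hb)]
    simp
  | succ n ih =>
    rw [← (Fin.consEquiv (fun _ => ℕ)).tsum_eq]
    have heq : ∀ p : ℕ × (Fin n → ℕ),
        (∏ j, f j ((Fin.consEquiv fun _ => ℕ) p j))
        = f 0 p.1 * ∏ j : Fin n, f j.succ (p.2 j) := by
      intro p
      simp [Fin.consEquiv, Fin.prod_univ_succ]
    have hnorm : Summable fun k : Fin n → ℕ => ‖∏ j : Fin n, f j.succ (k j)‖ := by
      have := summable_pi_prod (fun j n => ‖f j.succ n‖) (fun _ _ => norm_nonneg _)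
        (fun j => h _)
      simpa [norm_prod] using this
    rw [tsum_congr heq, Fin.prod_univ_succ, ← ih (fun j => f j.succ) (fun j => h _)]
    exact (tsum_mul_tsum_of_summable_norm (h 0) hnorm).symm

lemma norm_exp_I_mul (w : ℝ) (z : ℂ) :
    ‖Complex.exp (Complex.I * w * z)‖ = Real.exp (-(w * z.im)) := by
  rw [Complex.norm_exp]
  congr 1
  simp [Complex.mul_re, Complex.mul_im]

lemma norm_exp_term (n : ℕ) (z : ℂ) :
    ‖Complex.exp (Complex.I * (2 * n + 1) * z)‖ = Real.exp (-((2 * n + 1) * z.im)) := by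
  have h : Complex.I * (2 * n + 1) * z = Complex.I * ((2 * n + 1 : ℝ) : ℂ) * z := by
    push_cast; ring
  rw [h, norm_exp_I_mul]

lemma sin_exp_summable {z : ℂ} (hz : 0 < z.im) :
    Summable (fun n : ℕ => ‖Complex.exp (Complex.I * (2 * n + 1) * z)‖) := by
  have h : ∀ n : ℕ, ‖Complex.exp (Complex.I * (2 * n + 1) * z)‖
      = Real.exp (-z.im) * (Real.exp (-(2 * z.im))) ^ n := by
    intro n
    rw [norm_exp_term, ← Real.exp_nat_mul, ← Real.exp_add]
    congr 1; ring
  rw [funext h]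
  apply Summable.mul_left
  exact summable_geometric_of_lt_one (Real.exp_nonneg _)
    (Real.exp_lt_one_iff.mpr (by linarith))

lemma sin_inv_eq {z : ℂ} (hz : 0 < z.im) :
    (Complex.sin z)⁻¹
      = (-2 * Complex.I) * ∑' n : ℕ, Complex.exp (Complex.I * (2 * n + 1) * z) := by
  set q : ℂ := Complex.exp (2 * Complex.I * z) with hqdef
  have hqnorm : ‖q‖ < 1 := by
    have h : (2 : ℂ) * Complex.I * z = Complex.I * ((2 : ℝ) : ℂ) * z := by push_cast; ring
    rw [hqdef, h, norm_exp_I_mul, Real.exp_lt_one_iff]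
    nlinarith
  have hq1 : (1 : ℂ) - q ≠ 0 := by
    intro h
    have hq : q = 1 := by linear_combination -h
    rw [hq] at hqnorm; simp at hqnorm
  have hterm : ∀ n : ℕ, Complex.exp (Complex.I * (2 * n + 1) * z)
      = Complex.exp (Complex.I * z) * q ^ n := by
    intro n
    rw [hqdef, ← Complex.exp_nat_mul, ← Complex.exp_add]
    congr 1; ring
  have hgeo : HasSum (fun n : ℕ => Complex.exp (Complex.I * (2 * n + 1) * z))
      (Complex.exp (Complex.I * z) * (1 - q)⁻¹) := by
    rw [funext hterm]
    exact (hasSum_geometric_of_norm_lt_one hqnorm).mul_left _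
  rw [hgeo.tsum_eq]
  have hA : Complex.exp (-z * Complex.I) = Complex.exp (-(Complex.I * z)) := by
    congr 1; ring
  have hB : Complex.exp (z * Complex.I) = q * Complex.exp (-(Complex.I * z)) := by
    rw [hqdef, ← Complex.exp_add]; congr 1; ring
  have hsin : Complex.sin z = (1 - q) * (Complex.I / 2) * Complex.exp (-(Complex.I * z)) := by
    rw [Complex.sin, hA, hB]; ring
  rw [hsin, Complex.exp_neg]
  have hE : Complex.exp (Complex.I * z) ≠ 0 := Complex.exp_ne_zero _
  field_simp
  ring_nf
  simp [Complex.I_sq]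

lemma im_cz (c t ε : ℝ) : ((c : ℂ) * ((t : ℂ) + Complex.I * ε)).im = c * ε := by
  simp [Complex.mul_im]

lemma prod_sin_inv {m : ℕ} (c : Fin m → ℝ) (hc : ∀ j, 0 < c j) {ε : ℝ} (hε : 0 < ε)
    (t : ℝ) :
    (∏ j, Complex.sin ((c j : ℂ) * ((t : ℂ) + Complex.I * ε)))⁻¹
      = (-2 * Complex.I) ^ m *
        ∑' k : Fin m → ℕ,
          Complex.exp (Complex.I * ((∑ j, (2 * (k j : ℝ) + 1) * c j : ℝ) : ℂ)
            * ((t : ℂ) + Complex.I * ε)) := by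
  set w : ℂ := (t : ℂ) + Complex.I * ε with hw
  have him : ∀ j, 0 < ((c j : ℂ) * w).im := fun j => by
    rw [hw, im_cz]; exact mul_pos (hc j) hε
  rw [← Finset.prod_inv_distrib]
  have h1 : ∀ j ∈ Finset.univ, (Complex.sin ((c j : ℂ) * w))⁻¹
      = (-2 * Complex.I) * ∑' n : ℕ, Complex.exp (Complex.I * (2 * n + 1) * ((c j : ℂ) * w)) :=
    fun j _ => sin_inv_eq (him j)
  rw [Finset.prod_congr rfl h1, Finset.prod_mul_distrib, Finset.prod_const, Finset.card_univ,
    Fintype.card_fin]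
  congr 1
  rw [← tsum_pi_prod (fun j n => Complex.exp (Complex.I * (2 * n + 1) * ((c j : ℂ) * w)))
    (fun j => sin_exp_summable (him j))]
  apply tsum_congr
  intro k
  rw [← Complex.exp_sum]
  congr 1
  push_cast
  simp only [Finset.mul_sum, Finset.sum_mul]
  exact Finset.sum_congr rfl (fun j _ => by ring)

lemma fourierT_eq (φ : SchwartzMap ℝ ℂ) (t : ℝ) :
    fourierT φ t = FourierTransform.fourier ⇑φ (t / (2 * π)) := by
  rw [fourierT, Real.fourier_eq']
  congr 1
  ext v
  rw [smul_eq_mul, mul_comm]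
  congr 1
  simp only [RCLike.inner_apply, conj_trivial]
  have h : -2 * π * (t / (2 * π) * v) = -(t * v) := by
    field_simp
  rw [h]; push_cast; ring

lemma key_inversion (φ : SchwartzMap ℝ ℂ) (a : ℝ) :
    ∫ t : ℝ, fourierT φ t * Complex.exp (Complex.I * a * t) = 2 * π * φ a := by
  have h2π : (0:ℝ) < 2 * π := by positivity
  have hFi : Integrable (FourierTransform.fourier ⇑φ) := by
    have := (SchwartzMap.fourierTransformCLM ℂ φ).integrable (μ := volume)
    rwa [SchwartzMap.fourierTransformCLM_apply, SchwartzMap.fourier_coe] at this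
  have hinv : FourierTransformInv.fourierInv (FourierTransform.fourier ⇑φ) = ⇑φ :=
    φ.continuous.fourierInv_fourier_eq φ.integrable hFi
  have key : ∫ u : ℝ, fourierT φ (2*π*u) * Complex.exp (Complex.I * a * (2*π*u : ℝ))
      = φ a := by
    have heq : ∀ u : ℝ, fourierT φ (2*π*u) * Complex.exp (Complex.I * a * (2*π*u : ℝ))
        = Complex.exp ((2 * π * (u * a) : ℝ) * Complex.I) • FourierTransform.fourier ⇑φ u := by
      intro u
      rw [fourierT_eq, smul_eq_mul, mul_comm (Complex.exp _) _]
      congr 2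
      · field_simp
      · push_cast; ring
    calc ∫ u : ℝ, fourierT φ (2*π*u) * Complex.exp (Complex.I * a * (2*π*u : ℝ))
        = ∫ u : ℝ, Complex.exp ((2 * π * (u * a) : ℝ) * Complex.I) • FourierTransform.fourier ⇑φ u :=
          integral_congr_ae (Filter.Eventually.of_forall heq)
      _ = FourierTransformInv.fourierInv (FourierTransform.fourier ⇑φ) a := by
          rw [Real.fourierInv_eq']
          simp only [RCLike.inner_apply, conj_trivial]
          simp_rw [mul_comm a]
      _ = φ a := by rw [hinv]
  have hcv := MeasureTheory.Measure.integral_comp_mul_left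
    (fun t : ℝ => fourierT φ t * Complex.exp (Complex.I * a * t)) (2*π)
  push_cast at hcv
  push_cast at key
  rw [key] at hcv
  rw [abs_of_pos (inv_pos.mpr h2π), Complex.real_smul] at hcv
  rw [hcv]
  push_cast
  rw [← mul_assoc, mul_inv_cancel₀ (by push_cast; norm_num [Real.pi_ne_zero] : (2*(π:ℂ)) ≠ 0),
    one_mul]

lemma fourierT_continuous (φ : SchwartzMap ℝ ℂ) : Continuous (fourierT φ) := by
  have h : fourierT φ = fun t => (SchwartzMap.fourierTransformCLM ℂ φ) (t / (2 * π)) := by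
    funext t
    rw [fourierT_eq, SchwartzMap.fourierTransformCLM_apply, SchwartzMap.fourier_coe]
  rw [h]
  exact (SchwartzMap.fourierTransformCLM ℂ φ).continuous.comp
    (continuous_id.div_const _)

lemma fourierT_integrable (φ : SchwartzMap ℝ ℂ) : Integrable (fourierT φ) := by
  have h2π : (2 * π : ℝ) ≠ 0 := by positivity
  have h : fourierT φ = fun t => (SchwartzMap.fourierTransformCLM ℂ φ) ((2*π)⁻¹ * t) := by
    funext t
    rw [fourierT_eq, SchwartzMap.fourierTransformCLM_apply, SchwartzMap.fourier_coe]
    congr 1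
    rw [div_eq_inv_mul]
  rw [h]
  exact (integrable_comp_mul_left_iff _ (inv_ne_zero h2π)).mpr
    (SchwartzMap.fourierTransformCLM ℂ φ).integrable

lemma summable_exp_geom (c ε : ℝ) (hc : 0 < c) (hε : 0 < ε) :
    Summable (fun n : ℕ => Real.exp (-((2 * n + 1) * c * ε))) := by
  have h : ∀ n : ℕ, Real.exp (-((2 * n + 1) * c * ε))
      = Real.exp (-(c * ε)) * (Real.exp (-(2 * c * ε))) ^ n := by
    intro n
    rw [← Real.exp_nat_mul, ← Real.exp_add]
    congr 1; ring
  rw [funext h]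
  apply Summable.mul_left
  exact summable_geometric_of_lt_one (Real.exp_nonneg _)
    (Real.exp_lt_one_iff.mpr (by nlinarith))

lemma summable_exp_weights {m : ℕ} (c : Fin m → ℝ) (hc : ∀ j, 0 < c j) {ε : ℝ}
    (hε : 0 < ε) :
    Summable (fun k : Fin m → ℕ =>
      Real.exp (-((∑ j, (2 * (k j : ℝ) + 1) * c j) * ε))) := by
  have h : ∀ k : Fin m → ℕ, Real.exp (-((∑ j, (2 * (k j : ℝ) + 1) * c j) * ε))
      = ∏ j, Real.exp (-((2 * (k j : ℝ) + 1) * c j * ε)) := by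
    intro k
    rw [← Real.exp_sum]
    congr 1
    rw [Finset.sum_mul, ← Finset.sum_neg_distrib]
  rw [funext h]
  apply summable_pi_prod (fun j n => Real.exp (-((2 * (n : ℝ) + 1) * c j * ε)))
    (fun j n => Real.exp_nonneg _) (fun j => summable_exp_geom (c j) ε (hc j) hε)

end Stmt1Aux

namespace Stmt1Aux

lemma exp_split (a ε t : ℝ) :
    Complex.exp (Complex.I * a * ((t : ℂ) + Complex.I * ε))
      = Complex.exp (Complex.I * a * t) * (Real.exp (-(a * ε)) : ℂ) := by
  rw [Complex.ofReal_exp, ← Complex.exp_add]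
  congr 1
  push_cast
  linear_combination ((a : ℂ) * ε) * Complex.I_sq

lemma integral_eq {m : ℕ} (c : Fin m → ℝ) (hc : ∀ j, 0 < c j) (φ : SchwartzMap ℝ ℂ)
    {ε : ℝ} (hε : 0 < ε) :
    ∫ t : ℝ, fourierT φ t / ∏ j, Complex.sin ((c j : ℂ) * ((t : ℂ) + Complex.I * ε))
      = (-2 * Complex.I) ^ m * (2 * (π : ℂ)) *
        ∑' k : Fin m → ℕ,
          (Real.exp (-((∑ j, (2 * (k j : ℝ) + 1) * c j) * ε)) : ℂ)
            * φ (∑ j, (2 * (k j : ℝ) + 1) * c j) := by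
  set a : (Fin m → ℕ) → ℝ := fun k => ∑ j, (2 * (k j : ℝ) + 1) * c j with ha
  set F : (Fin m → ℕ) → ℝ → ℂ := fun k t =>
    fourierT φ t * Complex.exp (Complex.I * (a k : ℂ) * ((t : ℂ) + Complex.I * ε)) with hF
  have him : ∀ t : ℝ, ((t : ℂ) + Complex.I * ε).im = ε := by intro t; simp
  have hnormexp : ∀ (b : ℝ) (t : ℝ),
      ‖Complex.exp (Complex.I * (b : ℂ) * ((t : ℂ) + Complex.I * ε))‖
        = Real.exp (-(b * ε)) := by
    intro b t
    rw [norm_exp_I_mul, him]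
  have hnormF : ∀ k t, ‖F k t‖ = ‖fourierT φ t‖ * Real.exp (-(a k * ε)) := by
    intro k t
    rw [hF]
    simp only
    rw [norm_mul, hnormexp]
  have hFint : ∀ k, Integrable (F k) := by
    intro k
    have h1 : Integrable (fun t : ℝ =>
        Complex.exp (Complex.I * (a k : ℂ) * ((t : ℂ) + Complex.I * ε)) * fourierT φ t) :=
      Integrable.bdd_mul (fourierT_integrable φ)
        (Continuous.aestronglyMeasurable (Complex.continuous_exp.comp (by continuity)))
        (ae_of_all _ fun t => le_of_eq (hnormexp _ t))
    exact h1.congr (ae_of_all _ fun t => mul_comm _ _)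
  have hFnormint : ∀ k, ∫ t, ‖F k t‖ = (∫ t, ‖fourierT φ t‖) * Real.exp (-(a k * ε)) := by
    intro k
    simp_rw [hnormF]
    rw [MeasureTheory.integral_mul_const]
  have hFsum : Summable (fun k => ∫ t, ‖F k t‖) := by
    rw [funext hFnormint]
    exact ((summable_exp_weights c hc hε).mul_left _)
  have hint := hasSum_integral_of_summable_integral_norm hFint hFsum
  have hpt : ∀ t : ℝ,
      fourierT φ t / ∏ j, Complex.sin ((c j : ℂ) * ((t : ℂ) + Complex.I * ε))
        = (-2 * Complex.I) ^ m * ∑' k : Fin m → ℕ, F k t := by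
    intro t
    rw [div_eq_mul_inv, prod_sin_inv c hc hε t]
    calc fourierT φ t * ((-2 * Complex.I) ^ m *
          ∑' k : Fin m → ℕ, Complex.exp (Complex.I * ((a k : ℝ) : ℂ) * ((t : ℂ) + Complex.I * ε)))
        = (-2 * Complex.I) ^ m * (fourierT φ t *
          ∑' k : Fin m → ℕ, Complex.exp (Complex.I * ((a k : ℝ) : ℂ) * ((t : ℂ) + Complex.I * ε))) := by
          ring
      _ = (-2 * Complex.I) ^ m * ∑' k : Fin m → ℕ, F k t := by
          rw [← tsum_mul_left]
  have hintval : ∀ k, ∫ t, F k t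
      = 2 * (π : ℂ) * ((Real.exp (-(a k * ε)) : ℂ) * φ (a k)) := by
    intro k
    have h2 : ∀ t : ℝ, F k t
        = (fourierT φ t * Complex.exp (Complex.I * (a k) * t)) * (Real.exp (-(a k * ε)) : ℂ) := by
      intro t
      rw [hF]
      simp only
      rw [exp_split]
      ring
    simp_rw [h2]
    rw [MeasureTheory.integral_mul_const, key_inversion]
    ring
  calc ∫ t : ℝ, fourierT φ t / ∏ j, Complex.sin ((c j : ℂ) * ((t : ℂ) + Complex.I * ε))
      = ∫ t : ℝ, (-2 * Complex.I) ^ m * ∑' k : Fin m → ℕ, F k t := by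
        exact integral_congr_ae (Filter.Eventually.of_forall hpt)
    _ = (-2 * Complex.I) ^ m * ∫ t : ℝ, ∑' k : Fin m → ℕ, F k t := by
        rw [MeasureTheory.integral_const_mul]
    _ = (-2 * Complex.I) ^ m * ∑' k : Fin m → ℕ, ∫ t, F k t := by
        rw [hint.tsum_eq]
    _ = (-2 * Complex.I) ^ m * ∑' k : Fin m → ℕ,
          2 * (π : ℂ) * ((Real.exp (-(a k * ε)) : ℂ) * φ (a k)) := by
        rw [tsum_congr hintval]
    _ = (-2 * Complex.I) ^ m * (2 * (π : ℂ) *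
          ∑' k : Fin m → ℕ, (Real.exp (-(a k * ε)) : ℂ) * φ (a k)) := by
        rw [tsum_mul_left]
    _ = (-2 * Complex.I) ^ m * (2 * (π : ℂ)) *
          ∑' k : Fin m → ℕ, (Real.exp (-(a k * ε)) : ℂ) * φ (a k) := by
        ring

end Stmt1Aux

namespace Stmt1Aux

lemma summable_inv_sq {c : ℝ} (hc : 0 < c) :
    Summable (fun n : ℕ => (((2 * (n : ℝ) + 1) * c) ^ 2)⁻¹) := by
  have h0 : Summable (fun n : ℕ => ((n : ℝ) ^ 2)⁻¹) := by
    simpa [one_div] using Real.summable_one_div_nat_pow.mpr (by norm_num : 1 < 2)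
  have h1 : Summable (fun n : ℕ => (((n : ℝ) + 1) ^ 2)⁻¹) := by
    have := (summable_nat_add_iff 1).mpr h0
    apply this.congr
    intro n
    push_cast
    ring_nf
  apply Summable.of_nonneg_of_le (fun n => by positivity) ?_ (h1.mul_left (c ^ 2)⁻¹)
  intro n
  have hpos : (0:ℝ) < ((n : ℝ) + 1) ^ 2 * c ^ 2 := by positivity
  have hle : ((n : ℝ) + 1) ^ 2 * c ^ 2 ≤ ((2 * (n : ℝ) + 1) * c) ^ 2 := by
    rw [mul_pow]
    have : ((n : ℝ) + 1) ^ 2 ≤ (2 * (n : ℝ) + 1) ^ 2 := by nlinarith [Nat.cast_nonneg (α := ℝ) n]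
    nlinarith [sq_nonneg c]
  calc (((2 * (n : ℝ) + 1) * c) ^ 2)⁻¹ ≤ (((n : ℝ) + 1) ^ 2 * c ^ 2)⁻¹ :=
        inv_anti₀ hpos hle
    _ = (c ^ 2)⁻¹ * (((n : ℝ) + 1) ^ 2)⁻¹ := by rw [mul_inv]; ring

end Stmt1Aux

namespace Stmt1Aux

lemma summable_phi_bound {m : ℕ} (c : Fin m → ℝ) (hc : ∀ j, 0 < c j) (φ : SchwartzMap ℝ ℂ) :
    Summable (fun k : Fin m → ℕ => ‖φ (∑ j, (2 * (k j : ℝ) + 1) * c j)‖) := by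
  obtain ⟨C, hCpos, hC⟩ := φ.decay (2 * m) 0
  set a : (Fin m → ℕ) → ℝ := fun k => ∑ j, (2 * (k j : ℝ) + 1) * c j with ha
  have htermpos : ∀ (k : Fin m → ℕ) (j : Fin m), 0 < (2 * (k j : ℝ) + 1) * c j := by
    intro k j
    have := hc j
    positivity
  have hterm_le : ∀ (k : Fin m → ℕ) (j : Fin m), (2 * (k j : ℝ) + 1) * c j ≤ a k := by
    intro k j
    exact Finset.single_le_sum (fun i _ => (htermpos k i).le) (Finset.mem_univ j)
  have hprodpos : ∀ k : Fin m → ℕ, 0 < ∏ j, ((2 * (k j : ℝ) + 1) * c j) ^ 2 :=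
    fun k => Finset.prod_pos fun j _ => pow_pos (htermpos k j) 2
  have hprod_le : ∀ k : Fin m → ℕ,
      ∏ j, ((2 * (k j : ℝ) + 1) * c j) ^ 2 ≤ ‖a k‖ ^ (2 * m) := by
    intro k
    have h1 : ∏ j, ((2 * (k j : ℝ) + 1) * c j) ≤ ∏ _j : Fin m, ‖a k‖ := by
      apply Finset.prod_le_prod (fun j _ => (htermpos k j).le)
      exact fun j _ => (hterm_le k j).trans (le_abs_self _)
    calc ∏ j, ((2 * (k j : ℝ) + 1) * c j) ^ 2
        = (∏ j, (2 * (k j : ℝ) + 1) * c j) ^ 2 := by rw [Finset.prod_pow]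
      _ ≤ (∏ _j : Fin m, ‖a k‖) ^ 2 := by
          apply pow_le_pow_left₀ (Finset.prod_nonneg fun j _ => (htermpos k j).le) h1
      _ = ‖a k‖ ^ (2 * m) := by
          rw [Finset.prod_const, Finset.card_univ, Fintype.card_fin, ← pow_mul, mul_comm]
  have hbound : ∀ k : Fin m → ℕ,
      ‖φ (a k)‖ ≤ C * ∏ j, (((2 * (k j : ℝ) + 1) * c j) ^ 2)⁻¹ := by
    intro k
    have h2 := hC (a k)
    rw [norm_iteratedFDeriv_zero] at h2
    have h4 : (∏ j, ((2 * (k j : ℝ) + 1) * c j) ^ 2) * ‖φ (a k)‖ ≤ C := by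
      calc (∏ j, ((2 * (k j : ℝ) + 1) * c j) ^ 2) * ‖φ (a k)‖
          ≤ ‖a k‖ ^ (2 * m) * ‖φ (a k)‖ :=
            mul_le_mul_of_nonneg_right (hprod_le k) (norm_nonneg _)
        _ ≤ C := h2
    rw [mul_comm, ← le_div_iff₀ (hprodpos k)] at h4
    calc ‖φ (a k)‖ ≤ C / ∏ j, ((2 * (k j : ℝ) + 1) * c j) ^ 2 := h4
      _ = C * ∏ j, (((2 * (k j : ℝ) + 1) * c j) ^ 2)⁻¹ := by
          rw [div_eq_mul_inv, Finset.prod_inv_distrib]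
  apply Summable.of_nonneg_of_le (fun k => norm_nonneg _) hbound
  apply Summable.mul_left
  apply summable_pi_prod (fun j n => (((2 * (n : ℝ) + 1) * c j) ^ 2)⁻¹)
    (fun j n => by positivity) (fun j => summable_inv_sq (hc j))

end Stmt1Aux


open Stmt1Aux in
/-- for positive reals `c_1,…,c_m`,
`(1/2π)⟨1/∏_j sin(c_j(t+i0)), φ̂⟩ = (-2i)^m Σ_{k∈ℤ_+^m} φ(Σ_j (2k_j+1)c_j)`,
where the pairing is the limit as `ε → 0⁺` of the regularized integral. -/
theorem stmt1 (m : ℕ) (c : Fin m → ℝ) (hc : ∀ j, 0 < c j) (φ : SchwartzMap ℝ ℂ) :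
    Tendsto
      (fun ε : ℝ =>
        (1 / (2 * (π : ℂ))) *
          ∫ t : ℝ, fourierT φ t /
            ∏ j : Fin m, Complex.sin ((c j : ℂ) * ((t : ℂ) + Complex.I * ε)))
      (𝓝[>] (0 : ℝ))
      (𝓝 ((-2 * Complex.I) ^ m *
        ∑' k : Fin m → ℕ, φ (∑ j : Fin m, (2 * (k j : ℝ) + 1) * c j))) := by
  set a : (Fin m → ℕ) → ℝ := fun k => ∑ j, (2 * (k j : ℝ) + 1) * c j with ha
  have hπ : ((π : ℂ)) ≠ 0 := by
    simpa using Complex.ofReal_ne_zero.mpr Real.pi_ne_zero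
  have hanneg : ∀ k, 0 ≤ a k :=
    fun k => Finset.sum_nonneg fun j _ => by have := hc j; positivity
  have hmain : ∀ᶠ (ε : ℝ) in 𝓝[>] (0 : ℝ),
      (1 / (2 * (π : ℂ))) *
          ∫ t : ℝ, fourierT φ t /
            ∏ j : Fin m, Complex.sin ((c j : ℂ) * ((t : ℂ) + Complex.I * (ε : ℂ)))
        = (-2 * Complex.I) ^ m *
            ∑' k : Fin m → ℕ, ((Real.exp (-(a k * ε)) : ℝ) : ℂ) * φ (a k) := by
    filter_upwards [self_mem_nhdsWithin] with ε (hε : ε ∈ Set.Ioi (0:ℝ))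
    rw [integral_eq c hc φ hε]
    have hts : (∑' k : Fin m → ℕ,
          ((Real.exp (-((∑ j, (2 * (k j : ℝ) + 1) * c j) * ε)) : ℝ) : ℂ)
            * φ (∑ j, (2 * (k j : ℝ) + 1) * c j))
        = ∑' k : Fin m → ℕ, ((Real.exp (-(a k * ε)) : ℝ) : ℂ) * φ (a k) := by
      apply tsum_congr; intro k; rw [ha]
    rw [hts]
    field_simp
    ring_nf
    simp only [mul_comm ε]
  rw [tendsto_congr' hmain]
  apply Tendsto.const_mul
  have hbound := summable_phi_bound c hc φ
  apply tendsto_tsum_of_dominated_convergence hbound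
  · intro k
    have hcont : Continuous fun ε : ℝ => (Real.exp (-(a k * ε)) : ℂ) * φ (a k) := by
      continuity
    have h0 := hcont.tendsto 0
    simp only [mul_zero, neg_zero, Real.exp_zero, Complex.ofReal_one, one_mul] at h0
    exact tendsto_nhdsWithin_of_tendsto_nhds h0
  · filter_upwards [self_mem_nhdsWithin] with ε (hε : ε ∈ Set.Ioi (0:ℝ))
    intro k
    rw [norm_mul]
    have h1 : ‖((Real.exp (-(a k * ε)) : ℝ) : ℂ)‖ = Real.exp (-(a k * ε)) := by
      rw [Complex.norm_real, Real.norm_eq_abs, abs_of_pos (Real.exp_pos _)]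
    rw [h1]
    have h2 : Real.exp (-(a k * ε)) ≤ 1 := by
      rw [Real.exp_le_one_iff]
      have : (0:ℝ) < ε := hε
      nlinarith [hanneg k]
    calc Real.exp (-(a k * ε)) * ‖φ (a k)‖ ≤ 1 * ‖φ (a k)‖ :=
          mul_le_mul_of_nonneg_right h2 (norm_nonneg _)
      _ = ‖φ (a k)‖ := one_mul _
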